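/- Let R be a G-graded commutative ring such that for every homogeneous element a ∈ h(R), the annihilator Ann_R(a) is generated by an idempotent (Ann_R(a) = bR with b^2 = b). Then R is an EM-G-graded ring. -/

import Mathlib

open Polynomial

/-- `R` (with grading `𝒜`) is an EM-`G`-graded ring. -/
def IsEMGGraded {G R : Type*} [CommRing R] (𝒜 : G → AddSubgroup R) : Prop :=
  ∀ f : R[X], f ≠ 0 → (∃ σ : G, ∀ i, f.coeff i ∈ 𝒜 σ) → f ∉ nonZeroDivisors R[X] →
    ∃ (c : R) (g : R[X]), c ∉ nonZeroDivisors R ∧ g ∈ nonZeroDivisors R[X] ∧ f = C c * g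

/-- If for every homogeneous `a ∈ h(R)` the annihilator of `a` is generated
by an idempotent, then `R` is an EM-`G`-graded ring. -/
theorem stmt_18 {G R : Type*} [AddGroup G] [DecidableEq G] [CommRing R]
    (𝒜 : G → AddSubgroup R) [GradedRing 𝒜]
    (hid : ∀ a : R, (∃ σ : G, a ∈ 𝒜 σ) →
      ∃ b : R, b * b = b ∧ ∀ r : R, r * a = 0 ↔ r ∈ Ideal.span {b}) :
    IsEMGGraded 𝒜 := by
  intro f hf hhom hfz
  obtain ⟨σ, hσ⟩ := hhom
  -- choose idempotent generators for annihilators of coefficients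
  choose b hbidem hbspan using fun i => hid (f.coeff i) ⟨σ, hσ i⟩
  -- span membership as divisibility
  have hbdvd : ∀ i r, r * f.coeff i = 0 ↔ b i ∣ r := by
    intro i r; rw [hbspan i r, Ideal.mem_span_singleton]
  -- b i kills coeff i
  have hbkill : ∀ i, b i * f.coeff i = 0 := fun i => (hbdvd i (b i)).mpr dvd_rfl
  -- if b i ∣ r then r * b i = r
  have habs : ∀ i r, b i ∣ r → r * b i = r := by
    rintro i r ⟨s, rfl⟩
    rw [mul_comm (b i) s, mul_assoc, hbidem i]
  set B : R := f.support.prod b with hB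
  -- B kills every coefficient
  have hBkill : ∀ i, B * f.coeff i = 0 := by
    intro i
    by_cases hi : i ∈ f.support
    · rw [hB, ← Finset.prod_erase_mul _ _ hi, mul_assoc, hbkill i, mul_zero]
    · rw [Polynomial.notMem_support_iff.mp hi, mul_zero]
  -- if r kills every coefficient then r * B = r
  have habsB : ∀ r : R, (∀ i, r * f.coeff i = 0) → r * B = r := by
    intro r hr
    rw [hB]
    refine Finset.prod_induction b (fun x => r * x = r)
      (fun x y hx hy => show r * (x * y) = r by rw [← mul_assoc, hx, hy]) (mul_one r) ?_
    intro i _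
    exact habs i r ((hbdvd i r).mp (hr i))
  -- B is idempotent
  have hBidem : B * B = B := habsB B hBkill
  -- C B * f = 0
  have hCBf : C B * f = 0 := by
    ext n
    rw [coeff_C_mul, hBkill n, coeff_zero]
  -- B ≠ 0 by McCoy
  obtain ⟨r, hr0, hrf⟩ := Polynomial.notMem_nonZeroDivisors_iff.mp hfz
  have hrcoeff : ∀ i, r * f.coeff i = 0 := by
    intro i
    have := congrArg (fun p => Polynomial.coeff p i) hrf
    simpa [Polynomial.coeff_smul, smul_eq_mul] using this
  have hBne : B ≠ 0 := by
    intro h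
    exact hr0 (by rw [← habsB r hrcoeff, h, mul_zero])
  refine ⟨1 - B, f + C B, ?_, ?_, ?_⟩
  · -- 1 - B is a zero divisor
    intro hmem
    have : (1 - B) * B = 0 := by rw [sub_mul, one_mul, hBidem, sub_self]
    exact hBne (hmem.2 B (by rwa [mul_comm] at this))
  · -- f + C B is regular
    rw [Polynomial.mem_nonZeroDivisors_iff]
    intro a ha
    have hacoeff : ∀ i, a * (f + C B).coeff i = 0 := by
      intro i
      have := congrArg (fun p => Polynomial.coeff p i) ha
      simp only [Polynomial.coeff_smul, smul_eq_mul, Polynomial.coeff_zero] at this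
      exact this
    have h0 : a * (f.coeff 0 + B) = 0 := by
      have := hacoeff 0
      rwa [Polynomial.coeff_add, Polynomial.coeff_C_zero] at this
    have hhi : ∀ i, i ≠ 0 → a * f.coeff i = 0 := by
      intro i hi
      have := hacoeff i
      rwa [Polynomial.coeff_add, Polynomial.coeff_C, if_neg hi, add_zero] at this
    -- multiply h0 by B : a*coeff0*B + a*B*B = 0, coeff0*B = 0, B*B = B ⇒ a*B = 0
    have haB : a * B = 0 := by
      have h1 : a * (f.coeff 0 + B) * B = 0 := by rw [h0, zero_mul]
      have h2 : a * (f.coeff 0 + B) * B = a * B := by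
        rw [mul_add, add_mul, mul_assoc a (f.coeff 0) B, mul_comm (f.coeff 0) B, hBkill 0,
          mul_zero, zero_add, mul_assoc, hBidem]
      rw [← h2, h1]
    have ha0 : a * f.coeff 0 = 0 := by
      have := h0
      rw [mul_add, haB, add_zero] at this
      exact this
    have hall : ∀ i, a * f.coeff i = 0 := by
      intro i
      rcases eq_or_ne i 0 with rfl | hi
      · exact ha0
      · exact hhi i hi
    rw [← habsB a hall]
    exact haB
  · -- f = C (1 - B) * (f + C B)
    have : C (B * B) = C B := by rw [hBidem]
    rw [map_sub, map_one, sub_mul, one_mul, mul_add, hCBf, zero_add, ← map_mul, hBidem]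
    ring
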